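/- Let I be an ideal in a commutative R-algebra A and let (L,ρ) be an (R,A)-Lie algebra with an I-standard basis {x₁,…,x_d} and corresponding generating set F = {f₁,…,f_r} for I. Then: (a) the centraliser C_L(F) equals A x_{r+1} ⊕ ⋯ ⊕ A x_d; (b) the normaliser N_L(I) equals I x₁ ⊕ ⋯ ⊕ I x_r ⊕ C_L(F); (c) N_L(I)/IL is a free A/I-module with basis the images of x_{r+1},…,x_d; (d) N_L(I)/IL ≅ C_L(F)/I·C_L(F) as (R, A/I)-Lie algebras. -/

import Mathlib

/-- A Lie–Rinehart algebra (an `(R,A)`-Lie algebra). -/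
structure LieRinehart (R A L : Type*) [CommRing R] [CommRing A] [Algebra R A]
    [LieRing L] [LieAlgebra R L] [Module A L] where
  ρ : L →ₗ[A] Derivation R A A
  ρ_lie : ∀ x y : L, ρ ⁅x, y⁆ = ⁅ρ x, ρ y⁆
  leibniz : ∀ (a : A) (x y : L), ⁅x, a • y⁆ = a • ⁅x, y⁆ + (ρ x a) • y


section Aux
variable {R A L : Type*} [CommRing R] [CommRing A] [Algebra R A]
    [LieRing L] [LieAlgebra R L] [Module A L]

theorem aux_rho_repr (LR : LieRinehart R A L) {d r : ℕ} (hrd : r ≤ d)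
    (b : Module.Basis (Fin d) A L) (f : Fin r → A)
    (hδ : ∀ (i : Fin d) (j : Fin r),
      LR.ρ (b i) (f j) = if (i : ℕ) = (j : ℕ) then 1 else 0)
    (y : L) (j : Fin r) : LR.ρ y (f j) = b.repr y (Fin.castLE hrd j) := by
  conv_lhs => rw [← b.sum_repr y, map_sum]
  have hsum : ∀ (s : Finset (Fin d)) (D : Fin d → Derivation R A A),
      (∑ i ∈ s, D i) (f j) = ∑ i ∈ s, D i (f j) := by
    intro s D
    induction s using Finset.induction with
    | empty => simp [Derivation.zero_apply]
    | insert _ _ h ih => simp [Finset.sum_insert h, Derivation.add_apply, ih]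
  rw [hsum]
  simp only [map_smul, Derivation.smul_apply, hδ, smul_eq_mul, mul_ite, mul_one, mul_zero]
  have : ∀ i : Fin d, ((i : ℕ) = (j : ℕ)) = (i = Fin.castLE hrd j) := by
    intro i; simp [Fin.ext_iff]
  simp only [this]
  simp [Finset.sum_ite_eq']

theorem aux_mem_smul_top (I : Ideal A) {d : ℕ} (b : Module.Basis (Fin d) A L) (z : L) :
    z ∈ I • (⊤ : Submodule A L) ↔ ∀ i, b.repr z i ∈ I := by
  constructor
  · intro hz
    refine Submodule.smul_induction_on hz ?_ ?_
    · intro a ha x _ i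
      rw [map_smul]
      simpa using I.mul_mem_right _ ha
    · intro x y hx hy i
      rw [map_add]
      exact I.add_mem (hx i) (hy i)
  · intro h
    rw [← b.sum_repr z]
    exact Submodule.sum_mem _ fun i _ => Submodule.smul_mem_smul (h i) trivial

end Aux

section Aux2
variable {R A L : Type*} [CommRing R] [CommRing A] [Algebra R A]
    [LieRing L] [LieAlgebra R L] [Module A L]

theorem aux_repr_sum {d : ℕ} (b : Module.Basis (Fin d) A L) (c : Fin d → A) (k : Fin d) :
    b.repr (∑ i, c i • b i) k = c k := by
  simp [map_sum, Finsupp.single_apply, Finset.sum_ite_eq']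

theorem aux_norm (LR : LieRinehart R A L) (I : Ideal A) {d r : ℕ} (hrd : r ≤ d)
    (b : Module.Basis (Fin d) A L) (f : Fin r → A)
    (hgen : I = Ideal.span (Set.range f))
    (hδ : ∀ (i : Fin d) (j : Fin r),
      LR.ρ (b i) (f j) = if (i : ℕ) = (j : ℕ) then 1 else 0) (y : L) :
    (∀ a ∈ I, LR.ρ y a ∈ I) ↔ ∀ j : Fin r, b.repr y (Fin.castLE hrd j) ∈ I := by
  constructor
  · intro h j
    rw [← aux_rho_repr LR hrd b f hδ]
    exact h _ (hgen ▸ Ideal.subset_span ⟨j, rfl⟩)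
  · intro h a ha
    rw [hgen] at ha
    induction ha using Submodule.span_induction with
    | mem x hx =>
      obtain ⟨j, rfl⟩ := hx
      rw [aux_rho_repr LR hrd b f hδ]
      exact h j
    | zero => simp
    | add x y' hx hy hx' hy' => rw [map_add]; exact I.add_mem hx' hy'
    | smul a x hx hx' =>
      have hxI : x ∈ I := hgen ▸ hx
      rw [smul_eq_mul, Derivation.leibniz]
      exact I.add_mem (by simpa using I.mul_mem_left a hx')
        (by simpa using I.mul_mem_right _ hxI)
end Aux2

/-- let `I` be an ideal of `A` and `(L,ρ)` an `(R,A)`-Lie algebra with an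
`I`-standard basis `x₁,…,x_d` (an `A`-basis of `L`, given here by a `Basis`) and
corresponding generating set `f₁,…,f_r` of `I` (`r ≤ d`, `ρ(x_i)(f_j) = δ_{ij}`).
Writing `C = C_L(F) = A x_{r+1} ⊕ ⋯ ⊕ A x_d` and `N = N_L(I)`, we have:
(a) `C_L(F)` is the span of `x_{r+1},…,x_d`;
(b) `N = I x₁ ⊕ ⋯ ⊕ I x_r ⊕ C`;
(c) `N/IL` is a free `A/I`-module on the images of `x_{r+1},…,x_d`;
(d) `N/IL ≅ C/IC` (the inclusion `C → N` is surjective onto `N` modulo `IL` and has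
"kernel" `IC` modulo `IL`). -/
theorem standard_basis_normaliser {R A L : Type*} [CommRing R] [CommRing A] [Algebra R A]
    [LieRing L] [LieAlgebra R L] [Module A L]
    (LR : LieRinehart R A L) (I : Ideal A)
    {d r : ℕ} (hrd : r ≤ d)
    (b : Module.Basis (Fin d) A L) (f : Fin r → A)
    (hgen : I = Ideal.span (Set.range f))
    (hδ : ∀ (i : Fin d) (j : Fin r),
      LR.ρ (b i) (f j) = if (i : ℕ) = (j : ℕ) then 1 else 0) :
    -- (a) the centraliser of `F` is `A x_{r+1} ⊕ ⋯ ⊕ A x_d`: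
    (∀ y : L, (∀ j : Fin r, LR.ρ y (f j) = 0) ↔
      y ∈ Submodule.span A (b '' {i : Fin d | r ≤ (i : ℕ)})) ∧
    -- (b) `N_L(I) = I x₁ ⊕ ⋯ ⊕ I x_r ⊕ C_L(F)`:
    (∀ y : L, (∀ a ∈ I, LR.ρ y a ∈ I) ↔
      ∃ c : Fin d → A, (∀ i : Fin d, (i : ℕ) < r → c i ∈ I) ∧ y = ∑ i, c i • b i) ∧
    -- (c) `N_L(I)/IL` is free over `A/I` on the images of `x_{r+1},…,x_d`:
    (∀ y : L, (∀ a ∈ I, LR.ρ y a ∈ I) →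
      (∃ c : Fin d → A, (∀ i : Fin d, (i : ℕ) < r → c i = 0) ∧
        y - (∑ i, c i • b i) ∈ I • (⊤ : Submodule A L)) ∧
      (∀ c c' : Fin d → A,
        y - (∑ i, c i • b i) ∈ I • (⊤ : Submodule A L) →
        y - (∑ i, c' i • b i) ∈ I • (⊤ : Submodule A L) →
        ∀ i : Fin d, c i - c' i ∈ I)) ∧
    -- (d) `N_L(I)/IL ≅ C_L(F)/I·C_L(F)` as `(R, A/I)`-Lie algebras, via the inclusion:
    ((∀ y : L, (∀ a ∈ I, LR.ρ y a ∈ I) →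
      ∃ z ∈ Submodule.span A (b '' {i : Fin d | r ≤ (i : ℕ)}),
        y - z ∈ I • (⊤ : Submodule A L)) ∧
      (∀ z ∈ Submodule.span A (b '' {i : Fin d | r ≤ (i : ℕ)}),
        (z ∈ I • (⊤ : Submodule A L) ↔
          z ∈ I • Submodule.span A (b '' {i : Fin d | r ≤ (i : ℕ)})))) := by
  have hrho := aux_rho_repr LR hrd b f hδ
  have hnorm := aux_norm LR I hrd b f hgen hδ
  have hcastLE : ∀ (i : Fin d) (h : (i : ℕ) < r), Fin.castLE hrd ⟨(i : ℕ), h⟩ = i := by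
    intro i h; ext; rfl
  -- normaliser condition in terms of all coordinates below r
  have hnorm' : ∀ y : L, (∀ a ∈ I, LR.ρ y a ∈ I) →
      ∀ i : Fin d, (i : ℕ) < r → b.repr y i ∈ I := by
    intro y hy i hi
    have := (hnorm y).mp hy ⟨(i : ℕ), hi⟩
    rwa [hcastLE i hi] at this
  refine ⟨?_, ?_, ?_, ?_⟩
  · -- (a)
    intro y
    rw [Module.Basis.mem_span_image]
    constructor
    · intro h i hi
      simp only [Finset.mem_coe, Finsupp.mem_support_iff] at hi
      simp only [Set.mem_setOf_eq]
      by_contra hlt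
      push_neg at hlt
      exact hi (by rw [← hcastLE i hlt, ← hrho y ⟨(i : ℕ), hlt⟩]; exact h _)
    · intro h j
      rw [hrho]
      by_contra hne
      exact absurd (h (Finsupp.mem_support_iff.mpr hne)) (by simp)
  · -- (b)
    intro y
    rw [hnorm y]
    constructor
    · intro h
      refine ⟨b.repr y, fun i hi => ?_, (b.sum_repr y).symm⟩
      have := h ⟨(i : ℕ), hi⟩
      rwa [hcastLE i hi] at this
    · rintro ⟨c, hc, rfl⟩ j
      rw [aux_repr_sum]
      exact hc _ (by simpa using j.2)
  · -- (c)
    intro y hy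
    constructor
    · refine ⟨fun i => if (i : ℕ) < r then 0 else b.repr y i, fun i hi => if_pos hi, ?_⟩
      rw [aux_mem_smul_top I b]
      intro i
      rw [map_sub, Finsupp.sub_apply, aux_repr_sum]
      by_cases hi : (i : ℕ) < r
      · rw [if_pos hi, sub_zero]; exact hnorm' y hy i hi
      · rw [if_neg hi, sub_self]; exact I.zero_mem
    · intro c c' h1 h2 i
      rw [aux_mem_smul_top I b] at h1 h2
      have h1i := h1 i; have h2i := h2 i
      rw [map_sub, Finsupp.sub_apply, aux_repr_sum] at h1i h2i
      have := I.sub_mem h2i h1i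
      simpa using this
  · constructor
    · -- (d) surjectivity
      intro y hy
      refine ⟨∑ i : Fin d, (if r ≤ (i : ℕ) then b.repr y i else 0) • b i, ?_, ?_⟩
      · refine Submodule.sum_mem _ fun i _ => ?_
        by_cases hi : r ≤ (i : ℕ)
        · exact Submodule.smul_mem _ _ (Submodule.subset_span ⟨i, hi, rfl⟩)
        · rw [if_neg hi, zero_smul]; exact Submodule.zero_mem _
      · rw [aux_mem_smul_top I b]
        intro i
        rw [map_sub, Finsupp.sub_apply, aux_repr_sum]
        by_cases hi : r ≤ (i : ℕ)
        · rw [if_pos hi, sub_self]; exact I.zero_mem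
        · rw [if_neg hi, sub_zero]; exact hnorm' y hy i (not_le.mp hi)
    · -- (d) kernel
      intro z hz
      constructor
      · intro h
        rw [aux_mem_smul_top I b] at h
        rw [← b.sum_repr z]
        refine Submodule.sum_mem _ fun i _ => ?_
        by_cases hzi : b.repr z i = 0
        · rw [hzi, zero_smul]; exact Submodule.zero_mem _
        · have hiS : r ≤ (i : ℕ) :=
            ((Module.Basis.mem_span_image b).mp hz) (Finsupp.mem_support_iff.mpr hzi)
          exact Submodule.smul_mem_smul (h i) (Submodule.subset_span ⟨i, hiS, rfl⟩)
      · exact fun h => smul_mono_right I (le_top (a := Submodule.span A (b '' {i : Fin d | r ≤ (i : ℕ)}))) h
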